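/- Let M = ⟨m_1, …, m_l⟩ be a move sequence starting from a partition Π_0 of a weighted hypergraph H in which each node is moved at most once. Then for every net e ∈ E, the number of indices i such that u_i ∈ e and Φ_{Π_i}(e, t_i) = 1 (i.e., the move m_i increases the pin count of e in its target block from zero to one) is at most min(k, |e|). -/

import Mathlib

open Finset

variable {V ι : Type*} [DecidableEq V] [DecidableEq ι]

/-- The pin count `Φ_Π(e, i)`: the number of pins of net `e` assigned to block `i`. -/
def pinCount {k : ℕ} (pins : ι → Finset V) (P : V → Fin k) (e : ι) (i : Fin k) : ℕ :=
  ((pins e).filter fun v => P v = i).card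

/-- `applyMoves P0 mv j` is the partition `Π_j` obtained from `Π_0 = P0` after applying the
first `j` moves, where move number `j` (0-based) is `mv j = (u_j, s_j, t_j)` and moves node
`u_j` to block `t_j`. -/
def applyMoves {k : ℕ} (P0 : V → Fin k) (mv : ℕ → V × Fin k × Fin k) : ℕ → V → Fin k
  | 0 => P0
  | j + 1 => Function.update (applyMoves P0 mv j) (mv j).1 (mv j).2.2

/-- Once a node is moved, it stays in its target block as long as no later move touches it. -/
lemma applyMoves_persist {k : ℕ} (P0 : V → Fin k) (mv : ℕ → V × Fin k × Fin k)
    (j : ℕ) : ∀ m : ℕ, j < m → (∀ i, j < i → i < m → (mv i).1 ≠ (mv j).1) →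
    applyMoves P0 mv m (mv j).1 = (mv j).2.2 := by
  intro m
  induction m with
  | zero => omega
  | succ n ih =>
    intro hjm hno
    rcases eq_or_lt_of_le (Nat.lt_succ_iff.mp hjm) with h | h
    · subst h
      simp [applyMoves]
    · have hne : (mv n).1 ≠ (mv j).1 := hno n h (Nat.lt_succ_self n)
      have : applyMoves P0 mv (n + 1) (mv j).1 = applyMoves P0 mv n (mv j).1 := by
        simp [applyMoves, Function.update_of_ne (Ne.symm hne)]
      rw [this]
      exact ih h (fun i hi hin => hno i hi (Nat.lt_succ_of_lt hin))

/-- In a move sequence in which each node is moved at most once, for every net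
`e ∈ E` the number of moves `m_i` with `u_i ∈ e` that increase the pin count of `e` in their
target block from zero to one (i.e. `Φ_{Π_i}(e, t_i) = 1`) is at most `min(k, |e|)`. -/
theorem stmt3 {k : ℕ} (E : Finset ι) (pins : ι → Finset V) (c : V → ℝ) (ω : ι → ℝ)
    (hne : ∀ e ∈ E, (pins e).Nonempty) (hω : ∀ e ∈ E, 0 < ω e) (hc : ∀ v, 0 < c v)
    (P0 : V → Fin k) (l : ℕ) (mv : ℕ → V × Fin k × Fin k)
    (hsrc : ∀ j < l, (mv j).2.1 = applyMoves P0 mv j (mv j).1)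
    (htgt : ∀ j < l, (mv j).2.2 ≠ (mv j).2.1)
    (hdist : ∀ j₁ < l, ∀ j₂ < l, j₁ ≠ j₂ → (mv j₁).1 ≠ (mv j₂).1) :
    ∀ e ∈ E,
      ((Finset.range l).filter (fun j => (mv j).1 ∈ pins e ∧
          pinCount pins (applyMoves P0 mv (j + 1)) e (mv j).2.2 = 1)).card ≤
        min k (pins e).card := by
  intro e he
  set S := (Finset.range l).filter (fun j => (mv j).1 ∈ pins e ∧
      pinCount pins (applyMoves P0 mv (j + 1)) e (mv j).2.2 = 1) with hS
  refine le_min ?_ ?_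
  · -- bound by k: the target blocks are pairwise distinct
    have hinj : Set.InjOn (fun j => (mv j).2.2) ↑S := by
      have key : ∀ j₁ j₂ : ℕ, j₁ < l → j₂ < l → j₁ < j₂ → (mv j₁).1 ∈ pins e →
          (mv j₂).1 ∈ pins e →
          pinCount pins (applyMoves P0 mv (j₂ + 1)) e (mv j₂).2.2 = 1 →
          (mv j₁).2.2 ≠ (mv j₂).2.2 := by
        intro j₁ j₂ hj₁l hj₂l hlt hu₁ hu₂ hp₂ heq
        have h1 : applyMoves P0 mv (j₂ + 1) (mv j₁).1 = (mv j₂).2.2 := by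
          rw [← heq]
          exact applyMoves_persist P0 mv j₁ (j₂ + 1) (by omega)
            (fun i hi him => hdist i (by omega) j₁ hj₁l (by omega))
        have h2 : applyMoves P0 mv (j₂ + 1) (mv j₂).1 = (mv j₂).2.2 := by
          simp [applyMoves]
        have hd : (mv j₁).1 ≠ (mv j₂).1 := hdist j₁ hj₁l j₂ hj₂l (Nat.ne_of_lt hlt)
        have hsub : ({(mv j₁).1, (mv j₂).1} : Finset V) ⊆
            (pins e).filter fun v => applyMoves P0 mv (j₂ + 1) v = (mv j₂).2.2 := by
          intro v hv
          simp only [Finset.mem_insert, Finset.mem_singleton] at hv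
          rcases hv with rfl | rfl <;> simp [Finset.mem_filter, hu₁, hu₂, h1, h2]
        have hcard : 2 ≤ ((pins e).filter
            fun v => applyMoves P0 mv (j₂ + 1) v = (mv j₂).2.2).card := by
          calc 2 = ({(mv j₁).1, (mv j₂).1} : Finset V).card := by
                  rw [Finset.card_insert_of_notMem (by simpa using hd),
                    Finset.card_singleton]
            _ ≤ _ := Finset.card_le_card hsub
        rw [pinCount] at hp₂
        omega
      intro j₁ hj₁ j₂ hj₂ heq
      simp only [hS, coe_filter, Set.mem_setOf_eq, Finset.mem_range] at hj₁ hj₂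
      obtain ⟨hj₁l, hu₁, hp₁⟩ := hj₁
      obtain ⟨hj₂l, hu₂, hp₂⟩ := hj₂
      have heq' : (mv j₁).2.2 = (mv j₂).2.2 := heq
      rcases lt_trichotomy j₁ j₂ with h | h | h
      · exact absurd heq' (key j₁ j₂ hj₁l hj₂l h hu₁ hu₂ hp₂)
      · exact h
      · exact absurd heq'.symm (key j₂ j₁ hj₂l hj₁l h hu₂ hu₁ hp₁)
    calc S.card ≤ (Finset.univ : Finset (Fin k)).card :=
          Finset.card_le_card_of_injOn (fun j => (mv j).2.2)
            (fun j _ => Finset.mem_univ _) hinj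
      _ = k := by simp
  · -- bound by |e|: the moved nodes are pairwise distinct and in e
    refine Finset.card_le_card_of_injOn (fun j => (mv j).1) ?_ ?_
    · intro j hj
      simp only [hS, Finset.mem_coe, Finset.mem_filter, Finset.mem_range] at hj
      exact hj.2.1
    · intro j₁ hj₁ j₂ hj₂ heq
      simp only [hS, coe_filter, Set.mem_setOf_eq, Finset.mem_range] at hj₁ hj₂
      by_contra hne'
      exact hdist j₁ hj₁.1 j₂ hj₂.1 hne' heq
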